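/- Let A be a commutative ring and B an A-algebra that is free of finite rank n as an A-module, μ: B ⊗_A B → B the multiplication map and J = ker μ. If δ = Σ_i x_i ⊗ y_i belongs to Ann(J), then Tr_{(B⊗_A B)/B}(δ) = μ(δ), and consequently μ(δ) = Σ_i x_i y_i = Σ_i x_i · Tr_{B/A}(y_i) = Σ_i y_i · Tr_{B/A}(x_i). -/

import Mathlib

open TensorProduct

theorem myTrace_smulRight (R M : Type*) [CommRing R] [AddCommGroup M] [Module R M]
    [Module.Free R M] [Module.Finite R M] (f : M →ₗ[R] R) (v : M) :
    LinearMap.trace R M (f.smulRight v) = f v := by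
  have h : f.smulRight v = dualTensorHom R M M (f ⊗ₜ v) := by ext z; simp
  rw [h, LinearMap.trace_eq_contract_apply, contractLeft_apply]

section Aux
variable (A B : Type*) [CommRing A] [CommRing B] [Algebra A B]

/-- `lmul'` as a `B`-linear map for the left `B`-module structure. -/
noncomputable def mulB : B ⊗[A] B →ₗ[B] B where
  toFun := Algebra.TensorProduct.lmul' A
  map_add' := map_add _
  map_smul' b z := by
    show Algebra.TensorProduct.lmul' A (b • z) = b • Algebra.TensorProduct.lmul' A z
    rw [Algebra.smul_def b z, map_mul]
    have h : (algebraMap B (B ⊗[A] B)) b = b ⊗ₜ[A] (1 : B) := rfl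
    rw [h, Algebra.TensorProduct.lmul'_apply_tmul, mul_one, smul_eq_mul]

theorem aux_trace [Module.Free A B] [Module.Finite A B] (δ : B ⊗[A] B)
    (hδ : δ ∈ (RingHom.ker (Algebra.TensorProduct.lmul' A : B ⊗[A] B →ₐ[A] B)).annihilator) :
    Algebra.trace B (B ⊗[A] B) δ = Algebra.TensorProduct.lmul' A δ := by
  rw [Algebra.trace_apply]
  have key : (Algebra.lmul B (B ⊗[A] B)) δ = (mulB A B).smulRight δ := by
    refine LinearMap.ext fun z => ?_
    have hz : z - (Algebra.TensorProduct.lmul' A z) ⊗ₜ[A] (1 : B) ∈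
        RingHom.ker (Algebra.TensorProduct.lmul' A : B ⊗[A] B →ₐ[A] B) := by
      simp [RingHom.mem_ker, Algebra.TensorProduct.lmul'_apply_tmul]
    have h0 := Submodule.mem_annihilator.mp hδ _ hz
    rw [smul_eq_mul, mul_sub, sub_eq_zero] at h0
    show δ * z = (mulB A B).smulRight δ z
    rw [h0]
    show _ = (Algebra.TensorProduct.lmul' A z) • δ
    rw [Algebra.smul_def, mul_comm]
    rfl
  rw [key]
  exact myTrace_smulRight B (B ⊗[A] B) (mulB A B) δ

theorem aux_trace_tmul [Module.Free A B] [Module.Finite A B] (x y : B) :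
    Algebra.trace B (B ⊗[A] B) (x ⊗ₜ[A] y) = x * algebraMap A B (Algebra.trace A B y) := by
  rw [Algebra.trace_apply, Algebra.trace_apply]
  have key : (Algebra.lmul B (B ⊗[A] B)) (x ⊗ₜ[A] y)
      = x • ((Algebra.lmul A B y).baseChange B) := by
    refine LinearMap.ext fun z => ?_
    induction z using TensorProduct.induction_on with
    | zero => simp
    | tmul b c =>
        show (x ⊗ₜ[A] y) * (b ⊗ₜ[A] c) = x • ((Algebra.lmul A B y).baseChange B (b ⊗ₜ[A] c))
        rw [Algebra.TensorProduct.tmul_mul_tmul, LinearMap.baseChange_tmul, smul_tmul']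
        simp [mul_comm, smul_eq_mul]
    | add u v hu hv => simp only [map_add, hu, hv, LinearMap.smul_apply]
  rw [key, map_smul, smul_eq_mul, LinearMap.trace_baseChange]

theorem lmul'_comm (z : B ⊗[A] B) :
    Algebra.TensorProduct.lmul' A (Algebra.TensorProduct.comm A B B z)
      = Algebra.TensorProduct.lmul' A z := by
  induction z using TensorProduct.induction_on with
  | zero => simp
  | tmul b c => simp [Algebra.TensorProduct.comm_tmul,
      Algebra.TensorProduct.lmul'_apply_tmul, mul_comm]
  | add u v hu hv => simp [map_add, hu, hv]

theorem comm_mem_annihilator {δ : B ⊗[A] B}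
    (hδ : δ ∈ (RingHom.ker (Algebra.TensorProduct.lmul' A : B ⊗[A] B →ₐ[A] B)).annihilator) :
    Algebra.TensorProduct.comm A B B δ ∈
      (RingHom.ker (Algebra.TensorProduct.lmul' A : B ⊗[A] B →ₐ[A] B)).annihilator := by
  rw [Submodule.mem_annihilator] at hδ ⊢
  intro w hw
  have hw' : (Algebra.TensorProduct.comm A B B).symm w ∈
      RingHom.ker (Algebra.TensorProduct.lmul' A : B ⊗[A] B →ₐ[A] B) := by
    rw [RingHom.mem_ker] at hw ⊢
    rw [← lmul'_comm A B ((Algebra.TensorProduct.comm A B B).symm w)]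
    simpa using hw
  have h0 := hδ _ hw'
  rw [smul_eq_mul] at h0
  have := congrArg (Algebra.TensorProduct.comm A B B) h0
  rw [map_mul, map_zero] at this
  simpa [smul_eq_mul] using this

end Aux

/-- Let `B` be an `A`-algebra free of finite rank `n` as an `A`-module,
`μ : B ⊗[A] B → B` the multiplication map and `J = ker μ`.  If `δ = Σ_i x_i ⊗ y_i` belongs
to `Ann J`, then the trace of `δ` for the left `B`-module structure of `B ⊗[A] B` equals
`μ δ`, and consequently `μ δ = Σ_i x_i y_i = Σ_i x_i Tr_{B/A}(y_i) = Σ_i y_i Tr_{B/A}(x_i)`. -/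
theorem trace_eq_mul_of_mem_annihilator
    (A B : Type*) [CommRing A] [CommRing B] [Algebra A B]
    (n : ℕ) (ε : Module.Basis (Fin n) A B)
    (m : ℕ) (x y : Fin m → B)
    (hδ : (∑ i, x i ⊗ₜ[A] y i) ∈
      (RingHom.ker (Algebra.TensorProduct.lmul' A : B ⊗[A] B →ₐ[A] B)).annihilator) :
    Algebra.trace B (B ⊗[A] B) (∑ i, x i ⊗ₜ[A] y i)
        = Algebra.TensorProduct.lmul' A (∑ i, x i ⊗ₜ[A] y i) ∧
      Algebra.TensorProduct.lmul' A (∑ i, x i ⊗ₜ[A] y i) = ∑ i, x i * y i ∧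
      Algebra.TensorProduct.lmul' A (∑ i, x i ⊗ₜ[A] y i)
        = ∑ i, x i * algebraMap A B (Algebra.trace A B (y i)) ∧
      Algebra.TensorProduct.lmul' A (∑ i, x i ⊗ₜ[A] y i)
        = ∑ i, y i * algebraMap A B (Algebra.trace A B (x i)) := by
  haveI : Module.Free A B := Module.Free.of_basis ε
  haveI : Module.Finite A B := Module.Finite.of_basis ε
  have h1 := aux_trace A B _ hδ
  have h2 : Algebra.TensorProduct.lmul' A (∑ i, x i ⊗ₜ[A] y i) = ∑ i, x i * y i := by
    rw [map_sum]; simp [Algebra.TensorProduct.lmul'_apply_tmul]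
  have htr : Algebra.trace B (B ⊗[A] B) (∑ i, x i ⊗ₜ[A] y i)
      = ∑ i, x i * algebraMap A B (Algebra.trace A B (y i)) := by
    rw [map_sum]
    exact Finset.sum_congr rfl fun i _ => aux_trace_tmul A B (x i) (y i)
  have h3 := h1.symm.trans htr
  have hδ' : (∑ i, y i ⊗ₜ[A] x i) ∈
      (RingHom.ker (Algebra.TensorProduct.lmul' A : B ⊗[A] B →ₐ[A] B)).annihilator := by
    have hc : Algebra.TensorProduct.comm A B B (∑ i, x i ⊗ₜ[A] y i) = ∑ i, y i ⊗ₜ[A] x i := by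
      rw [map_sum]; simp [Algebra.TensorProduct.comm_tmul]
    rw [← hc]; exact comm_mem_annihilator A B hδ
  have h1' := aux_trace A B _ hδ'
  have htr' : Algebra.trace B (B ⊗[A] B) (∑ i, y i ⊗ₜ[A] x i)
      = ∑ i, y i * algebraMap A B (Algebra.trace A B (x i)) := by
    rw [map_sum]
    exact Finset.sum_congr rfl fun i _ => aux_trace_tmul A B (y i) (x i)
  have h2' : Algebra.TensorProduct.lmul' A (∑ i, y i ⊗ₜ[A] x i) = ∑ i, x i * y i := by
    rw [map_sum]; simp [Algebra.TensorProduct.lmul'_apply_tmul, mul_comm]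
  have h4 : Algebra.TensorProduct.lmul' A (∑ i, x i ⊗ₜ[A] y i)
      = ∑ i, y i * algebraMap A B (Algebra.trace A B (x i)) := by
    rw [h2, ← h2', ← h1', htr']
  exact ⟨h1, h2, h3, h4⟩
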